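/- There is an absolute constant C > 0 such that for all integers 1 ≤ k ≤ d, if G = (g_1,…,g_d) is a vector of independent standard Gaussian random variables, then E sup{⟨G,t⟩ : t ∈ ℝ^d, ‖t‖₁ ≤ √k, ‖t‖₂ ≤ 1} ≤ C·√(k·log(ed/k)). Consequently, for all ρ, r > 0 with r ≤ ρ ≤ √d·r, E sup{⟨G,t⟩ : t ∈ ℝ^d, ‖t‖₁ ≤ ρ, ‖t‖₂ ≤ r} ≤ C·ρ·√(log(e·d·r²/ρ²)). -/

import Mathlib

open MeasureTheory

noncomputable section

/-- Inner product on `ℝ^d`. -/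
def dotp {d : ℕ} (t x : Fin d → ℝ) : ℝ := ∑ i, t i * x i

/-- `ℓ₁` norm on `ℝ^d`. -/
def norm1 {d : ℕ} (t : Fin d → ℝ) : ℝ := ∑ i, |t i|

/-- Euclidean (`ℓ₂`) norm on `ℝ^d`. -/
def eNorm2 {d : ℕ} (t : Fin d → ℝ) : ℝ := Real.sqrt (∑ i, t i ^ 2)

/-- Gaussian mean width `ℓ*(T) = E sup_{t ∈ T} ⟨G, t⟩` of a set `T ⊆ ℝ^d`,
where `G` is a standard Gaussian vector. -/
def gaussWidth (d : ℕ) (T : Set (Fin d → ℝ)) : ℝ :=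
  ∫ g, (⨆ t ∈ T, dotp g t)
    ∂(Measure.pi fun _ : Fin d => ProbabilityTheory.gaussianReal 0 1)

namespace S11

open ProbabilityTheory Real
open scoped ENNReal NNReal

def q (β x : ℝ) : ℝ := (max (|x| - β) 0) ^ 2

lemma q_nonneg (β x : ℝ) : 0 ≤ q β x := sq_nonneg _

lemma q_meas (β : ℝ) : Measurable (q β) := by
  unfold q; fun_prop

lemma q_le {β : ℝ} (hβ : 1 ≤ β) (x : ℝ) :
    q β x ≤ 16 * Real.exp (-β ^ 2 / 4) * Real.exp (x ^ 2 / 4) := by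
  rcases le_or_gt |x| β with h | h
  · have h0 : max (|x| - β) 0 = 0 := max_eq_right (by linarith)
    rw [q, h0]
    norm_num
    positivity
  · have hu : 0 ≤ |x| - β := by linarith
    have hmax : max (|x| - β) 0 = |x| - β := max_eq_left hu
    rw [q, hmax]
    set u := |x| - β with hudef
    have huβ : u + β = |x| := by rw [hudef]; ring
    have hx2 : x ^ 2 = (u + β) ^ 2 := by rw [huβ, sq_abs]
    have h1 : u / 4 ≤ Real.exp (u / 4) := by
      have := Real.add_one_le_exp (u / 4); linarith
    have h2 : u ^ 2 / 16 ≤ Real.exp (u / 2) := by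
      have hm := mul_le_mul h1 h1 (by linarith) (Real.exp_nonneg _)
      calc u ^ 2 / 16 = (u / 4) * (u / 4) := by ring
        _ ≤ Real.exp (u / 4) * Real.exp (u / 4) := hm
        _ = Real.exp (u / 2) := by rw [← Real.exp_add]; ring_nf
    have h3 : Real.exp (u / 2) ≤ Real.exp (-β ^ 2 / 4 + x ^ 2 / 4) := by
      apply Real.exp_le_exp.mpr
      nlinarith [sq_nonneg u, hx2]
    calc u ^ 2 ≤ 16 * Real.exp (u / 2) := by linarith
      _ ≤ 16 * Real.exp (-β ^ 2 / 4 + x ^ 2 / 4) := by linarith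
      _ = 16 * Real.exp (-β ^ 2 / 4) * Real.exp (x ^ 2 / 4) := by
          rw [Real.exp_add]; ring

lemma sqrt_le_affine {X a : ℝ} (hX : 0 ≤ X) (ha : 0 < a) :
    Real.sqrt X ≤ X / (2 * a) + a / 2 := by
  have h1 : Real.sqrt X ^ 2 = X := Real.sq_sqrt hX
  have h2 := sq_nonneg (Real.sqrt X - a)
  have h3 := Real.sqrt_nonneg X
  rw [div_add_div _ _ (by linarith) (by norm_num), le_div_iff₀ (by linarith)]
  nlinarith


lemma gauss_eq : gaussianReal 0 1 =
    (volume : Measure ℝ).withDensity fun x => ((gaussianPDFReal 0 1 x).toNNReal : ℝ≥0∞) := by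
  rw [gaussianReal_of_var_ne_zero 0 one_ne_zero]; rfl

lemma pdf_eq (x : ℝ) :
    gaussianPDFReal 0 1 x = (Real.sqrt (2 * Real.pi))⁻¹ * Real.exp (-x ^ 2 / 2) := by
  simp [gaussianPDFReal]

lemma q_int {β : ℝ} (hβ : 1 ≤ β) :
    Integrable (q β) (gaussianReal 0 1) ∧
      ∫ x, q β x ∂(gaussianReal 0 1) ≤ 16 * Real.sqrt 2 * Real.exp (-β ^ 2 / 4) := by
  have hf₀ : Measurable fun x => (gaussianPDFReal 0 1 x).toNNReal :=
    (measurable_gaussianPDFReal 0 1).real_toNNReal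
  set M : ℝ → ℝ := fun x =>
    (16 * Real.exp (-β ^ 2 / 4) * (Real.sqrt (2 * Real.pi))⁻¹) * Real.exp (-(1/4) * x ^ 2) with hM
  have hsPi : (0:ℝ) < Real.sqrt (2 * Real.pi) := Real.sqrt_pos.mpr (by positivity)
  set P : ℝ → ℝ := fun x => gaussianPDFReal 0 1 x * q β x with hP
  have hcoe : (fun x => ((gaussianPDFReal 0 1 x).toNNReal : ℝ≥0) • q β x) = P := by
    funext x
    rw [NNReal.smul_def, Real.coe_toNNReal _ (gaussianPDFReal_nonneg 0 1 x), smul_eq_mul]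
  have hkey : ∀ x : ℝ, P x ≤ M x := by
    intro x
    have h1 := q_le hβ x
    have h2 : (Real.sqrt (2 * Real.pi))⁻¹ * Real.exp (-x ^ 2 / 2) *
        (16 * Real.exp (-β ^ 2 / 4) * Real.exp (x ^ 2 / 4)) = M x := by
      rw [hM]
      simp only []
      rw [show -(1/4) * x ^ 2 = (-x ^ 2 / 2) + x ^ 2 / 4 by ring, Real.exp_add]
      ring
    calc P x = (Real.sqrt (2 * Real.pi))⁻¹ * Real.exp (-x ^ 2 / 2) * q β x := by
          rw [hP]; simp only []; rw [pdf_eq]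
      _ ≤ (Real.sqrt (2 * Real.pi))⁻¹ * Real.exp (-x ^ 2 / 2) *
          (16 * Real.exp (-β ^ 2 / 4) * Real.exp (x ^ 2 / 4)) := by
          apply mul_le_mul_of_nonneg_left h1; positivity
      _ = M x := h2
  have hMint : Integrable M volume :=
    (integrable_exp_neg_mul_sq (by norm_num : (0:ℝ) < 1/4)).const_mul _
  have hnn : ∀ x : ℝ, 0 ≤ P x := fun x =>
    mul_nonneg (gaussianPDFReal_nonneg 0 1 x) (q_nonneg _ _)
  have hPmeas : Measurable P := (measurable_gaussianPDFReal 0 1).mul (q_meas β)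
  have hsm : Integrable P volume := by
    apply hMint.mono' hPmeas.aestronglyMeasurable
    filter_upwards with x
    rw [Real.norm_eq_abs, abs_of_nonneg (hnn x)]
    exact hkey x
  constructor
  · rw [gauss_eq, integrable_withDensity_iff_integrable_smul hf₀, hcoe]
    exact hsm
  · rw [gauss_eq, integral_withDensity_eq_integral_smul hf₀, hcoe]
    have step : ∫ x, P x ≤ ∫ x, M x :=
      integral_mono_of_nonneg (Filter.Eventually.of_forall hnn) hMint
        (Filter.Eventually.of_forall hkey)
    refine step.trans ?_
    have hMval : ∫ x, M x = (16 * Real.exp (-β ^ 2 / 4) * (Real.sqrt (2 * Real.pi))⁻¹) *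
        Real.sqrt (Real.pi / (1/4)) := by
      rw [hM]
      rw [integral_const_mul]
      rw [integral_gaussian]
    rw [hMval]
    have h4 : Real.sqrt (Real.pi / (1/4)) = Real.sqrt 2 * Real.sqrt (2 * Real.pi) := by
      rw [show Real.pi / (1/4) = 2 * (2 * Real.pi) by ring,
        Real.sqrt_mul (by norm_num : (0:ℝ) ≤ 2)]
    rw [h4]
    rw [show 16 * Real.exp (-β ^ 2 / 4) * (Real.sqrt (2 * Real.pi))⁻¹ *
        (Real.sqrt 2 * Real.sqrt (2 * Real.pi)) =
        (Real.sqrt (2 * Real.pi) * (Real.sqrt (2 * Real.pi))⁻¹) *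
        (16 * Real.sqrt 2 * Real.exp (-β ^ 2 / 4)) by ring]
    rw [mul_inv_cancel₀ (ne_of_gt hsPi), one_mul]


lemma pi_map_eval {d : ℕ} (i : Fin d) :
    (Measure.pi fun _ : Fin d => gaussianReal 0 1).map (Function.eval i) = gaussianReal 0 1 := by
  ext s hs
  rw [Measure.map_apply (measurable_pi_apply i) hs, Set.eval_preimage, Measure.pi_pi]
  rw [Finset.prod_eq_single i (fun j _ hj => by
    rw [Function.update_of_ne hj]; exact measure_univ) (fun h => absurd (Finset.mem_univ i) h)]
  rw [Function.update_self]

lemma integral_eval {d : ℕ} (i : Fin d) {f : ℝ → ℝ}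
    (hf : AEStronglyMeasurable f (gaussianReal 0 1)) :
    ∫ g, f (g i) ∂(Measure.pi fun _ : Fin d => gaussianReal 0 1) = ∫ x, f x ∂(gaussianReal 0 1) := by
  have h1 : AEStronglyMeasurable f
      ((Measure.pi fun _ : Fin d => gaussianReal 0 1).map (Function.eval i)) := by
    rwa [pi_map_eval]
  calc ∫ g, f (g i) ∂(Measure.pi fun _ : Fin d => gaussianReal 0 1)
      = ∫ x, f x ∂((Measure.pi fun _ : Fin d => gaussianReal 0 1).map (Function.eval i)) :=
        (integral_map (measurable_pi_apply i).aemeasurable h1).symm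
    _ = ∫ x, f x ∂(gaussianReal 0 1) := by rw [pi_map_eval]

lemma integrable_eval {d : ℕ} (i : Fin d) {f : ℝ → ℝ} (hf : Integrable f (gaussianReal 0 1)) :
    Integrable (fun g => f (g i)) (Measure.pi fun _ : Fin d => gaussianReal 0 1) := by
  have h1 : AEStronglyMeasurable f
      ((Measure.pi fun _ : Fin d => gaussianReal 0 1).map (Function.eval i)) := by
    rw [pi_map_eval]; exact hf.1
  have h2 : Integrable f ((Measure.pi fun _ : Fin d => gaussianReal 0 1).map (Function.eval i)) := by
    rw [pi_map_eval]; exact hf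
  exact (integrable_map_measure h1 (measurable_pi_apply i).aemeasurable).mp h2

lemma dotp_le {d : ℕ} {β ρ r : ℝ} (hβ : 0 ≤ β) (g t : Fin d → ℝ)
    (h1 : norm1 t ≤ ρ) (h2 : eNorm2 t ≤ r) :
    dotp g t ≤ β * ρ + Real.sqrt (∑ i, q β (g i)) * r := by
  have hterm : ∀ i : Fin d, g i * t i ≤ β * |t i| + max (|g i| - β) 0 * |t i| := by
    intro i
    have ha : g i * t i ≤ |g i| * |t i| := by
      calc g i * t i ≤ |g i * t i| := le_abs_self _
        _ = |g i| * |t i| := abs_mul _ _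
    have hb : |g i| ≤ β + max (|g i| - β) 0 := by
      rcases le_total (|g i|) β with h | h
      · have h0 : max (|g i| - β) 0 = 0 := max_eq_right (by linarith)
        linarith [h0.ge]
      · have h0 : max (|g i| - β) 0 = |g i| - β := max_eq_left (by linarith)
        linarith [h0.ge]
    calc g i * t i ≤ |g i| * |t i| := ha
      _ ≤ (β + max (|g i| - β) 0) * |t i| := mul_le_mul_of_nonneg_right hb (abs_nonneg _)
      _ = β * |t i| + max (|g i| - β) 0 * |t i| := by ring
  have hsum : dotp g t ≤ β * norm1 t + ∑ i, max (|g i| - β) 0 * |t i| := by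
    rw [dotp, norm1, Finset.mul_sum, ← Finset.sum_add_distrib]
    exact Finset.sum_le_sum fun i _ => hterm i
  have hcs : ∑ i, max (|g i| - β) 0 * |t i| ≤
      Real.sqrt (∑ i, q β (g i)) * Real.sqrt (∑ i, t i ^ 2) := by
    have h := Real.sum_mul_le_sqrt_mul_sqrt Finset.univ
      (fun i => max (|g i| - β) 0) (fun i => |t i|)
    simpa [q, sq_abs] using h
  have h2' : Real.sqrt (∑ i, t i ^ 2) ≤ r := h2
  have hnn : 0 ≤ Real.sqrt (∑ i, q β (g i)) := Real.sqrt_nonneg _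
  calc dotp g t ≤ β * norm1 t + ∑ i, max (|g i| - β) 0 * |t i| := hsum
    _ ≤ β * ρ + Real.sqrt (∑ i, q β (g i)) * Real.sqrt (∑ i, t i ^ 2) :=
        add_le_add (mul_le_mul_of_nonneg_left h1 hβ) hcs
    _ ≤ β * ρ + Real.sqrt (∑ i, q β (g i)) * r := by
        exact add_le_add_right (mul_le_mul_of_nonneg_left h2' hnn) _


lemma master (d : ℕ) (ρ r β a : ℝ) (hρ : 0 ≤ ρ) (hr : 0 ≤ r) (hβ : 1 ≤ β) (ha : 0 < a) :
    gaussWidth d {t | norm1 t ≤ ρ ∧ eNorm2 t ≤ r} ≤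
      β * ρ + r * (a / 2) + (r / (2 * a)) * (16 * Real.sqrt 2 * d * Real.exp (-β ^ 2 / 4)) := by
  obtain ⟨hqint, hqbd⟩ := q_int hβ
  set μ : Measure (Fin d → ℝ) := Measure.pi fun _ : Fin d => gaussianReal 0 1 with hμ
  have : IsProbabilityMeasure μ := by rw [hμ]; infer_instance
  set T : Set (Fin d → ℝ) := {t | norm1 t ≤ ρ ∧ eNorm2 t ≤ r} with hT
  set X : (Fin d → ℝ) → ℝ := fun g => ∑ i, q β (g i) with hX
  have hXnn : ∀ g, 0 ≤ X g := fun g => Finset.sum_nonneg fun i _ => q_nonneg _ _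
  have hXint : Integrable X μ := integrable_finset_sum _ (fun i _ => integrable_eval i hqint)
  have hXval : ∫ g, X g ∂μ = d * ∫ x, q β x ∂(gaussianReal 0 1) := by
    rw [hX]
    rw [integral_finset_sum _ (fun i _ => integrable_eval i hqint)]
    simp only [integral_eval _ hqint.1]
    rw [Finset.sum_const, Finset.card_univ, Fintype.card_fin, nsmul_eq_mul]
  set c₀ : ℝ := β * ρ + r * (a / 2) with hc₀def
  set c₁ : ℝ := r / (2 * a) with hc₁def
  have hc₁ : 0 ≤ c₁ := div_nonneg hr (by linarith)
  have hc₀ : 0 ≤ c₀ := by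
    have : (0:ℝ) ≤ β * ρ := mul_nonneg (by linarith) hρ
    have : (0:ℝ) ≤ r * (a / 2) := mul_nonneg hr (by linarith)
    rw [hc₀def]; linarith
  have hbd : ∀ g t, t ∈ T → dotp g t ≤ c₀ + c₁ * X g := by
    intro g t ht
    have h1 := dotp_le (d := d) (β := β) (le_trans zero_le_one hβ) g t ht.1 ht.2
    have h2 : Real.sqrt (X g) ≤ X g / (2 * a) + a / 2 := sqrt_le_affine (hXnn g) ha
    calc dotp g t ≤ β * ρ + Real.sqrt (∑ i, q β (g i)) * r := h1
      _ = β * ρ + r * Real.sqrt (X g) := by rw [hX]; ring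
      _ ≤ β * ρ + r * (X g / (2 * a) + a / 2) := by
          exact add_le_add_right (mul_le_mul_of_nonneg_left h2 hr) _
      _ = c₀ + c₁ * X g := by rw [hc₀def, hc₁def]; field_simp; ring
  have hnn : ∀ g, 0 ≤ c₀ + c₁ * X g := fun g =>
    add_nonneg hc₀ (mul_nonneg hc₁ (hXnn g))
  have hsup : ∀ g, (⨆ t ∈ T, dotp g t) ≤ c₀ + c₁ * X g := by
    intro g
    exact Real.iSup_le (fun t => Real.iSup_le (fun ht => hbd g t ht) (hnn g)) (hnn g)
  have h0T : (0 : Fin d → ℝ) ∈ T := by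
    constructor
    · simpa [norm1] using hρ
    · simpa [eNorm2] using hr
  have hge : ∀ g, 0 ≤ ⨆ t ∈ T, dotp g t := by
    intro g
    have hb : BddAbove (Set.range fun t => ⨆ _ : t ∈ T, dotp g t) := by
      refine ⟨c₀ + c₁ * X g, ?_⟩
      rintro x ⟨t, rfl⟩
      exact Real.iSup_le (fun ht => hbd g t ht) (hnn g)
    calc (0:ℝ) = dotp g 0 := by simp [dotp]
      _ = ⨆ _ : (0 : Fin d → ℝ) ∈ T, dotp g 0 := (ciSup_pos (p := (0 : Fin d → ℝ) ∈ T) (f := fun _ => dotp g 0) h0T).symm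
      _ ≤ ⨆ t, ⨆ _ : t ∈ T, dotp g t := le_ciSup hb 0
  have hint : Integrable (fun g => c₀ + c₁ * X g) μ :=
    (integrable_const c₀).add (hXint.const_mul c₁)
  have step : gaussWidth d T ≤ ∫ g, (c₀ + c₁ * X g) ∂μ := by
    rw [gaussWidth, ← hμ]
    exact integral_mono_of_nonneg (Filter.Eventually.of_forall hge) hint
      (Filter.Eventually.of_forall hsup)
  refine step.trans ?_
  rw [integral_add (integrable_const c₀) (hXint.const_mul c₁), integral_const,
    integral_const_mul, hXval]
  simp only [measure_univ, probReal_univ, ENNReal.toReal_one, smul_eq_mul, one_mul]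
  have hfinal : c₁ * ((d : ℝ) * ∫ x, q β x ∂(gaussianReal 0 1)) ≤
      c₁ * (16 * Real.sqrt 2 * d * Real.exp (-β ^ 2 / 4)) := by
    apply mul_le_mul_of_nonneg_left _ hc₁
    calc (d : ℝ) * ∫ x, q β x ∂(gaussianReal 0 1)
        ≤ (d : ℝ) * (16 * Real.sqrt 2 * Real.exp (-β ^ 2 / 4)) :=
          mul_le_mul_of_nonneg_left hqbd (Nat.cast_nonneg d)
      _ = 16 * Real.sqrt 2 * d * Real.exp (-β ^ 2 / 4) := by ring
  rw [hc₀def]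
  linarith


lemma sqrt2_le : Real.sqrt 2 ≤ 1.5 := by
  rw [show (1.5:ℝ) = Real.sqrt (1.5 ^ 2) by rw [Real.sqrt_sq]; norm_num]
  exact Real.sqrt_le_sqrt (by norm_num)

lemma exp_one_ge : (2.7:ℝ) ≤ Real.exp 1 := by
  linarith [Real.exp_one_gt_d9]


end S11

open S11

set_option maxHeartbeats 1000000

/-- `ℓ*(√k B₁^d ∩ B₂^d) ≤ C √(k log(ed/k))`, and consequently
`ℓ*(ρ B₁^d ∩ r B₂^d) ≤ C ρ √(log(e d r²/ρ²))` whenever `r ≤ ρ ≤ √d r`. -/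
theorem statement11 :
    ∃ C : ℝ, 0 < C ∧
      (∀ d k : ℕ, 1 ≤ k → k ≤ d →
        gaussWidth d {t | norm1 t ≤ Real.sqrt k ∧ eNorm2 t ≤ 1} ≤
          C * Real.sqrt (k * Real.log (Real.exp 1 * d / k))) ∧
      (∀ (d : ℕ) (ρ r : ℝ), 0 < r → r ≤ ρ → ρ ≤ Real.sqrt d * r →
        gaussWidth d {t | norm1 t ≤ ρ ∧ eNorm2 t ≤ r} ≤
          C * ρ * Real.sqrt (Real.log (Real.exp 1 * d * r ^ 2 / ρ ^ 2))) := by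
  refine ⟨5, by norm_num, ?_, ?_⟩
  · intro d k hk hkd
    have hk1 : (1:ℝ) ≤ (k:ℝ) := by exact_mod_cast hk
    have hkd' : (k:ℝ) ≤ (d:ℝ) := by exact_mod_cast hkd
    have hd1 : (1:ℝ) ≤ (d:ℝ) := le_trans hk1 hkd'
    have hkpos : (0:ℝ) < k := by linarith
    have hdpos : (0:ℝ) < d := by linarith
    set L : ℝ := Real.log (Real.exp 1 * d / k) with hLdef
    have hpos : (0:ℝ) < Real.exp 1 * d / k := by positivity
    have hL1 : 1 ≤ L := by
      rw [hLdef]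
      calc (1:ℝ) = Real.log (Real.exp 1) := (Real.log_exp 1).symm
        _ ≤ Real.log (Real.exp 1 * d / k) := by
            apply Real.log_le_log (Real.exp_pos 1)
            rw [le_div_iff₀ hkpos]
            calc Real.exp 1 * k ≤ Real.exp 1 * d :=
              mul_le_mul_of_nonneg_left hkd' (Real.exp_pos 1).le
              _ = Real.exp 1 * d := rfl
    have hL0 : (0:ℝ) ≤ L := by linarith
    have hsL : 1 ≤ Real.sqrt L := Real.one_le_sqrt.mpr hL1
    set β : ℝ := 2 * Real.sqrt L with hβdef
    have hβ : 1 ≤ β := by linarith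
    have hexp : Real.exp (-β ^ 2 / 4) = k / (Real.exp 1 * d) := by
      have hb2 : β ^ 2 = 4 * L := by
        rw [hβdef, mul_pow, Real.sq_sqrt hL0]; ring
      rw [hb2, show -(4 * L) / 4 = -L by ring, Real.exp_neg, hLdef, Real.exp_log hpos]
      rw [inv_div]
    have hsk : (0:ℝ) < Real.sqrt k := Real.sqrt_pos.mpr hkpos
    have hsk2 : Real.sqrt (k:ℝ) ^ 2 = (k:ℝ) := Real.sq_sqrt hkpos.le
    have hm := master d (Real.sqrt k) 1 β (3 * Real.sqrt k) (Real.sqrt_nonneg _)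
      zero_le_one hβ (by positivity)
    refine hm.trans ?_
    rw [hexp]
    have hsplit : Real.sqrt ((k:ℝ) * L) = Real.sqrt k * Real.sqrt L :=
      Real.sqrt_mul hkpos.le L
    have hE : (0:ℝ) < Real.exp 1 := Real.exp_pos 1
    have hterm3 : (1 / (2 * (3 * Real.sqrt k))) *
        (16 * Real.sqrt 2 * d * ((k:ℝ) / (Real.exp 1 * d))) ≤ 1.5 * Real.sqrt k := by
      have heq : (1 / (2 * (3 * Real.sqrt k))) *
          (16 * Real.sqrt 2 * d * ((k:ℝ) / (Real.exp 1 * d))) =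
          (16 * Real.sqrt 2 * k) / (6 * Real.sqrt k * Real.exp 1) := by
        field_simp
        ring
      rw [heq, div_le_iff₀ (by positivity)]
      have h1 : 16 * Real.sqrt 2 * (k:ℝ) ≤ 24 * k := by nlinarith [sqrt2_le, hkpos.le]
      have h2 : (24:ℝ) * k ≤ 1.5 * Real.sqrt k * (6 * Real.sqrt k * Real.exp 1) := by
        nlinarith [exp_one_ge, hsk2, hsk.le, hkpos.le]
      linarith
    rw [hsplit]
    have hβρ : β * Real.sqrt k = 2 * (Real.sqrt k * Real.sqrt L) := by rw [hβdef]; ring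
    nlinarith [hterm3, hsk.le, hsL, mul_nonneg hsk.le (sub_nonneg.mpr hsL)]
  · intro d ρ r hr hrρ hρd
    have hρ : (0:ℝ) < ρ := lt_of_lt_of_le hr hrρ
    have hd0 : (0:ℝ) ≤ d := Nat.cast_nonneg d
    have hsd : 1 ≤ Real.sqrt d := by
      nlinarith [hρd, hr, hrρ]
    have hd1 : (1:ℝ) ≤ (d:ℝ) := by
      nlinarith [Real.sq_sqrt hd0, hsd]
    have hρ2 : ρ ^ 2 ≤ (d:ℝ) * r ^ 2 := by
      have := Real.sq_sqrt hd0
      nlinarith [hρd, hρ.le, mul_nonneg (Real.sqrt_nonneg (d:ℝ)) hr.le]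
    set L : ℝ := Real.log (Real.exp 1 * d * r ^ 2 / ρ ^ 2) with hLdef
    have hpos : (0:ℝ) < Real.exp 1 * d * r ^ 2 / ρ ^ 2 := by positivity
    have hL1 : 1 ≤ L := by
      rw [hLdef]
      calc (1:ℝ) = Real.log (Real.exp 1) := (Real.log_exp 1).symm
        _ ≤ Real.log (Real.exp 1 * d * r ^ 2 / ρ ^ 2) := by
            apply Real.log_le_log (Real.exp_pos 1)
            rw [le_div_iff₀ (by positivity)]
            nlinarith [Real.exp_pos 1, hρ2]
    have hL0 : (0:ℝ) ≤ L := by linarith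
    have hsL : 1 ≤ Real.sqrt L := Real.one_le_sqrt.mpr hL1
    set β : ℝ := 2 * Real.sqrt L with hβdef
    have hβ : 1 ≤ β := by linarith
    have hexp : Real.exp (-β ^ 2 / 4) = ρ ^ 2 / (Real.exp 1 * d * r ^ 2) := by
      have hb2 : β ^ 2 = 4 * L := by
        rw [hβdef, mul_pow, Real.sq_sqrt hL0]; ring
      rw [hb2, show -(4 * L) / 4 = -L by ring, Real.exp_neg, hLdef, Real.exp_log hpos]
      rw [inv_div]
    have hm := master d ρ r β (3 * ρ / r) hρ.le hr.le hβ (by positivity)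
    refine hm.trans ?_
    rw [hexp]
    have hE : (0:ℝ) < Real.exp 1 := Real.exp_pos 1
    have hdpos : (0:ℝ) < d := by linarith
    have hrne : r ≠ 0 := ne_of_gt hr
    have hρne : ρ ≠ 0 := ne_of_gt hρ
    have hEne : Real.exp 1 ≠ 0 := ne_of_gt hE
    have hdne : (d:ℝ) ≠ 0 := by positivity
    have hterm3 : (r / (2 * (3 * ρ / r))) *
        (16 * Real.sqrt 2 * d * (ρ ^ 2 / (Real.exp 1 * d * r ^ 2))) ≤ 1.5 * ρ := by
      have heq : (r / (2 * (3 * ρ / r))) *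
          (16 * Real.sqrt 2 * d * (ρ ^ 2 / (Real.exp 1 * d * r ^ 2))) =
          (16 * Real.sqrt 2 * ρ) / (6 * Real.exp 1) := by
        field_simp
        ring
      rw [heq, div_le_iff₀ (by positivity)]
      nlinarith [sqrt2_le, exp_one_ge, hρ.le]
    have hterm2 : r * ((3 * ρ / r) / 2) = 1.5 * ρ := by
      rw [div_div, mul_div_assoc']
      rw [div_eq_iff (by positivity)]
      ring
    rw [hterm2]
    have hβρ : β * ρ = 2 * (ρ * Real.sqrt L) := by rw [hβdef]; ring
    nlinarith [hterm3, hρ.le, hsL, mul_nonneg hρ.le (sub_nonneg.mpr hsL)]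


end
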